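/- Let F be a field, w = ((0,1),(1,0)) ∈ GL₂(F), and for x, y ∈ F with 1 + xy ≠ 0 let ι(x,y) = ((1,x),(y,1+xy)). Then w · ι(x,y) · w⁻¹ = d₁ · ι(y(1+xy), x/(1+xy)) · d₂ for some diagonal matrices d₁, d₂ ∈ GL₂(F); i.e. conjugation by w sends ι(x,y) into the same double coset of the diagonal torus as ι(y(1+xy), x/(1+xy)). -/

import Mathlib

/-- Conjugation by `w = ((0,1),(1,0))` sends `ι(x,y)` into the same diagonal double
coset as `ι(y(1+xy), x/(1+xy))`. -/
theorem stmt_10 {F : Type*} [Field F] (x y : F) (h : 1 + x * y ≠ 0) :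
    ∃ a b c d : F, a ≠ 0 ∧ b ≠ 0 ∧ c ≠ 0 ∧ d ≠ 0 ∧
      (!![0, 1; 1, 0] : Matrix (Fin 2) (Fin 2) F) * !![1, x; y, 1 + x * y] * (!![0, 1; 1, 0])⁻¹
        = !![a, 0; 0, b] *
            !![1, y * (1 + x * y);
               x / (1 + x * y), 1 + (y * (1 + x * y)) * (x / (1 + x * y))] *
            !![c, 0; 0, d] := by
  refine ⟨1 + x * y, 1 + x * y, 1, ((1 + x * y) * (1 + x * y))⁻¹, h, h, one_ne_zero,
    inv_ne_zero (mul_ne_zero h h), ?_⟩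
  have hinv : (!![0, 1; 1, 0] : Matrix (Fin 2) (Fin 2) F)⁻¹ = !![0, 1; 1, 0] := by
    rw [Matrix.inv_def]
    simp [Matrix.adjugate_fin_two, Matrix.det_fin_two_of]
  rw [hinv]
  have h' : 1 + y * x ≠ 0 := by rwa [mul_comm y x]
  ext i j
  fin_cases i <;> fin_cases j <;>
    simp [Matrix.mul_apply, Fin.sum_univ_succ] <;> field_simp <;> ring
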